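/- For y ∈ C(P,A)_λ, the point x = ψ̃(y) satisfies all defining inequalities of O(P,A)_λ: for every p ∈ P−A and every q covered by p, x_p ≥ x_q (resp. x_p ≥ λ_q if q ∈ A), and for every a ∈ A with p < a, x_p ≤ λ_a. -/

import Mathlib

open Finset Set

section Marked

variable {P : Type*} [PartialOrder P]

/-- A marked poset: `A` contains all extremal (minimal or maximal) elements of `P`. -/
def IsMarkedPoset (A : Set P) : Prop := ∀ p : P, IsMin p ∨ IsMax p → p ∈ A

/-- The marked order polytope `O(P,A)_λ ⊆ ℝ^{P-A}`. -/
def markedOrderPolytope (A : Set P) (lam : P → ℝ) : Set ({p : P // p ∉ A} → ℝ) :=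
  {x | (∀ p q : {p : P // p ∉ A}, (p : P) < (q : P) → x p ≤ x q) ∧
       (∀ a ∈ A, ∀ p : {p : P // p ∉ A}, a < (p : P) → lam a ≤ x p) ∧
       (∀ a ∈ A, ∀ p : {p : P // p ∉ A}, (p : P) < a → x p ≤ lam a)}

/-- The marked chain polytope `C(P,A)_λ ⊆ ℝ^{P-A}`. -/
def markedChainPolytope (A : Set P) (lam : P → ℝ) : Set ({p : P // p ∉ A} → ℝ) :=
  {x | (∀ p, 0 ≤ x p) ∧
       ∀ a ∈ A, ∀ b ∈ A, ∀ (k : ℕ) (c : Fin (k + 1) → {p : P // p ∉ A}),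
         StrictMono c → a < (c 0 : P) → (c (Fin.last k) : P) < b →
         ∑ i, x (c i) ≤ lam b - lam a}

/-- The transfer map `φ̃`: `φ̃(x)_p` is the minimum of `x_p - x_q` over covers `q ⋖ p`,
where `x_q` is read as `λ_q` when `q ∈ A`. -/
noncomputable def transferMap (A : Set P) (lam : P → ℝ)
    (x : {p : P // p ∉ A} → ℝ) : {p : P // p ∉ A} → ℝ := fun p =>
  sInf ({v | ∃ q : {p : P // p ∉ A}, (q : P) ⋖ (p : P) ∧ v = x p - x q} ∪
        {v | ∃ a ∈ A, a ⋖ (p : P) ∧ v = x p - lam a})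

open scoped Classical in
/-- The map `ψ`, defined recursively going up the poset:
`ψ(y)_p = λ_p` for `p ∈ A`, and `ψ(y)_p = y_p + max {ψ(y)_q : p ≻ q}` for `p ∉ A`. -/
noncomputable def psiFull [Finite P] (A : Set P) (lam : P → ℝ)
    (y : {p : P // p ∉ A} → ℝ) : P → ℝ :=
  WellFounded.fix wellFounded_lt (fun p ih =>
    if h : p ∈ A then lam p
    else y ⟨p, h⟩ + sSup {v | ∃ q, ∃ hq : q ⋖ p, v = ih q hq.lt})

/-- `ψ̃(y)`: the restriction of `ψ(y)` to the coordinates in `P - A`. -/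
noncomputable def psiTilde [Finite P] (A : Set P) (lam : P → ℝ)
    (y : {p : P // p ∉ A} → ℝ) : {p : P // p ∉ A} → ℝ :=
  fun p => psiFull A lam y p

end Marked


variable {P : Type*} [PartialOrder P]

open scoped Classical in
lemma psiFull_eq [Finite P] (A : Set P) (lam : P → ℝ) (y : {p : P // p ∉ A} → ℝ) (p : P) :
    psiFull A lam y p = if h : p ∈ A then lam p
      else y ⟨p, h⟩ + sSup (psiFull A lam y '' {q | q ⋖ p}) := by
  show WellFounded.fix _ _ p = _
  rw [WellFounded.fix_eq]
  split
  next h => rfl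
  next h =>
    show y ⟨p, h⟩ + sSup {v | ∃ q, ∃ _ : q ⋖ p, v = psiFull A lam y q} = _
    have hset : {v | ∃ q, ∃ _ : q ⋖ p, v = psiFull A lam y q}
        = psiFull A lam y '' {q | q ⋖ p} := by
      ext v
      simp only [Set.mem_setOf_eq, Set.mem_image]
      constructor
      · rintro ⟨q, hq, rfl⟩; exact ⟨q, hq, rfl⟩
      · rintro ⟨q, hq, rfl⟩; exact ⟨q, hq, rfl⟩
    rw [hset]

section Helpers

variable [Fintype P] {A : Set P} {lam : P → ℝ} {y : {p : P // p ∉ A} → ℝ}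

lemma covSet_finite (p : P) : (psiFull A lam y '' {q | q ⋖ p}).Finite :=
  (Set.toFinite _).image _

lemma covSet_nonempty (hA : IsMarkedPoset A) {p : P} (hp : p ∉ A) :
    (psiFull A lam y '' {q | q ⋖ p}).Nonempty := by
  obtain ⟨q, hq⟩ := exists_covBy_of_wellFoundedGT (fun h => hp (hA p (Or.inl h)))
  exact ⟨_, ⟨q, hq, rfl⟩⟩

lemma psiFull_chain (hA : IsMarkedPoset A) :
    ∀ (p : P), ∀ hp : p ∉ A,
    ∃ (k : ℕ) (c : Fin (k + 1) → {p : P // p ∉ A}) (a : P),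
      StrictMono c ∧ a ∈ A ∧ a < (c 0 : P) ∧ (c (Fin.last k) : P) = p ∧
      psiFull A lam y p = lam a + ∑ i, y (c i) := by
  intro p
  induction p using WellFoundedLT.induction with
  | ind p ih =>
  intro hp
  rw [psiFull_eq, dif_neg hp]
  obtain ⟨q, hq, hval⟩ := (covSet_nonempty hA hp).csSup_mem (covSet_finite p)
  by_cases hqA : q ∈ A
  · haveI : Subsingleton (Fin (0 + 1)) := Fin.subsingleton_one
    refine ⟨0, fun _ => ⟨p, hp⟩, q, Subsingleton.strictMono _, hqA, hq.lt, rfl, ?_⟩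
    rw [← hval, psiFull_eq, dif_pos hqA, Fin.sum_univ_one]
    ring
  · obtain ⟨k, c, a, hc, haA, ha0, hlast, heq⟩ := ih q hq.lt hqA
    refine ⟨k + 1, Fin.snoc c ⟨p, hp⟩, a, ?_, haA, ?_, ?_, ?_⟩
    · rw [Fin.strictMono_iff_lt_succ]
      intro i
      cases i using Fin.lastCases with
      | last =>
        rw [Fin.succ_last, Fin.snoc_castSucc, Fin.snoc_last]
        exact Subtype.coe_lt_coe.mp (by rw [hlast]; exact hq.lt)
      | cast j =>
        rw [Fin.succ_castSucc, Fin.snoc_castSucc, Fin.snoc_castSucc]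
        exact hc (Fin.castSucc_lt_succ (i := j))
    · rw [show (0 : Fin (k + 2)) = Fin.castSucc 0 from rfl, Fin.snoc_castSucc]
      exact ha0
    · rw [Fin.snoc_last]
    · have hsum : ∑ i, y ((Fin.snoc c ⟨p, hp⟩ : Fin (k + 2) → {p : P // p ∉ A}) i)
          = (∑ i, y (c i)) + y ⟨p, hp⟩ := by
        rw [Fin.sum_univ_castSucc]
        simp only [Fin.snoc_castSucc, Fin.snoc_last]
      rw [← hval, heq, hsum]
      ring

end Helpers

/-- For `y ∈ C(P,A)_λ`, the point `x = ψ̃(y)` satisfies all the defining inequalities of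
the marked order polytope: it is weakly increasing along covers (with values `λ_q` at
marked covered elements), and is bounded above by `λ_a` for marked elements above. -/
theorem psiTilde_satisfies_order_inequalities [Fintype P] (A : Set P) (lam : P → ℝ)
    (hA : IsMarkedPoset A) (y : {p : P // p ∉ A} → ℝ)
    (hy : y ∈ markedChainPolytope A lam) :
    (∀ p q : {p : P // p ∉ A}, (q : P) ⋖ (p : P) →
      psiTilde A lam y q ≤ psiTilde A lam y p) ∧
    (∀ p : {p : P // p ∉ A}, ∀ a ∈ A, a ⋖ (p : P) → lam a ≤ psiTilde A lam y p) ∧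
    (∀ p : {p : P // p ∉ A}, ∀ a ∈ A, (p : P) < a → psiTilde A lam y p ≤ lam a) := by
  obtain ⟨hy0, hych⟩ := hy
  have hub : ∀ (p : P) (hp : p ∉ A) (q : P), q ⋖ p →
      psiFull A lam y q ≤ psiFull A lam y p := by
    intro p hp q hq
    rw [psiFull_eq A lam y p, dif_neg hp]
    have h1 : psiFull A lam y q ≤ sSup (psiFull A lam y '' {q | q ⋖ p}) :=
      le_csSup (covSet_finite p).bddAbove ⟨q, hq, rfl⟩
    have h2 := hy0 ⟨p, hp⟩
    linarith
  refine ⟨?_, ?_, ?_⟩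
  · intro p q hq
    exact hub p p.2 q hq
  · intro p a ha hq
    have := hub p p.2 a hq
    rwa [psiFull_eq A lam y a, dif_pos ha] at this
  · intro p a ha hpa
    obtain ⟨k, c, a', hc, ha'A, ha0, hlast, heq⟩ := psiFull_chain hA (p : P) p.2
    have := hych a' ha'A a ha k c hc ha0 (by rw [hlast]; exact hpa)
    show psiFull A lam y p ≤ lam a
    rw [heq]
    linarith
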